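/- If g : [a,b] → ℝ has negligible variation on E ⊆ [a,b], then the symmetric upper Dini derivative D̄g(x) := limsup_{y→x} |(g(y)−g(x))/(y−x)| equals 0 for almost every x ∈ E. -/

import Mathlib

open Set MeasureTheory Filter
open scoped Classical

/-- A tagged partition of `[a, b]`: division points `t 0 = a ≤ t 1 ≤ ⋯ ≤ t n = b`
together with tags `tag i ∈ [t i, t (i+1)]`. -/
structure TaggedPartition (a b : ℝ) where
  n : ℕ
  t : ℕ → ℝ
  tag : ℕ → ℝ
  t_first : t 0 = a
  t_last : t n = b
  t_mono : ∀ i < n, t i ≤ t (i + 1)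
  tag_mem : ∀ i < n, tag i ∈ Set.Icc (t i) (t (i + 1))

/-- A tagged partition is subordinate to a gauge `δ` if each interval is contained in the
open ball of radius `δ` around its tag. -/
def TaggedPartition.Subordinate {a b : ℝ} (P : TaggedPartition a b) (δ : ℝ → ℝ) : Prop :=
  ∀ i < P.n,
    Set.Icc (P.t i) (P.t (i + 1)) ⊆ Set.Ioo (P.tag i - δ (P.tag i)) (P.tag i + δ (P.tag i))

/-- A gauge on `[a, b]` is positive on `[a, b]`. -/
def IsGauge (a b : ℝ) (δ : ℝ → ℝ) : Prop := ∀ x ∈ Set.Icc a b, 0 < δ x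

/-- `f` has negligible variation on `E ⊆ [a, b]`. -/

def NegVar (a b : ℝ) (f : ℝ → ℝ) (E : Set ℝ) : Prop :=
  ∀ ε > 0, ∃ δ : ℝ → ℝ, IsGauge a b δ ∧ ∀ P : TaggedPartition a b, P.Subordinate δ →
    (∑ i ∈ Finset.range P.n,
      if P.tag i ∈ E then |f (P.t (i + 1)) - f (P.t i)| else 0) < ε

/-- `f` has negligible conditional variation on `E ⊆ [a, b]`. -/

def NegCondVar (a b : ℝ) (f : ℝ → ℝ) (E : Set ℝ) : Prop :=
  ∀ ε > 0, ∃ δ : ℝ → ℝ, IsGauge a b δ ∧ ∀ P : TaggedPartition a b, P.Subordinate δ →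
    |∑ i ∈ Finset.range P.n,
      if P.tag i ∈ E then f (P.t (i + 1)) - f (P.t i) else 0| < ε

/-- `I` is the Henstock–Kurzweil integral of `h` on `[a, b]` (with `a ≤ b`). -/
def HKIntegralTo (a b : ℝ) (h : ℝ → ℝ) (I : ℝ) : Prop :=
  ∀ ε > 0, ∃ δ : ℝ → ℝ, IsGauge a b δ ∧ ∀ P : TaggedPartition a b, P.Subordinate δ →
    |(∑ i ∈ Finset.range P.n, h (P.tag i) * (P.t (i + 1) - P.t i)) - I| < ε

/-- Oriented HK integral: `(HK)∫_a^b h = I`, with the convention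
`(HK)∫_b^a h = -(HK)∫_a^b h`. -/
def HKIntegral (a b : ℝ) (h : ℝ → ℝ) (I : ℝ) : Prop :=
  if a ≤ b then HKIntegralTo a b h I else HKIntegralTo b a h (-I)

open scoped NNReal ENNReal

namespace Aux

lemma sum_range_add' {M : Type*} [AddCommMonoid M] (f : ℕ → M) (m n : ℕ) :
    ∑ i ∈ Finset.range (m + n), f i
      = (∑ i ∈ Finset.range m, f i) + ∑ i ∈ Finset.range n, f (m + i) := by
  induction n with
  | zero => simp
  | succ k ih => rw [← Nat.add_assoc, Finset.sum_range_succ, ih, Finset.sum_range_succ, add_assoc]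

/-- trivial partition of `[u,u]` -/
def point (u : ℝ) : TaggedPartition u u where
  n := 0
  t := fun _ => u
  tag := fun _ => u
  t_first := rfl
  t_last := rfl
  t_mono := by intro i hi; omega
  tag_mem := by intro i hi; omega

lemma point_sub (u : ℝ) (δ : ℝ → ℝ) : (point u).Subordinate δ := by
  intro i hi; exact absurd hi (by simp [point])

/-- single-interval partition of `[u,v]` with tag `τ` -/
def single (u v τ : ℝ) (h1 : u ≤ τ) (h2 : τ ≤ v) : TaggedPartition u v where
  n := 1
  t := fun i => if i = 0 then u else v
  tag := fun _ => τ
  t_first := rfl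
  t_last := rfl
  t_mono := by
    intro i hi
    have : i = 0 := by omega
    subst this
    show (if (0:ℕ) = 0 then u else v) ≤ (if (0+1:ℕ) = 0 then u else v)
    rw [if_pos rfl, if_neg (by omega : ¬(0+1 = 0))]
    linarith
  tag_mem := by
    intro i hi
    have : i = 0 := by omega
    subst this
    show τ ∈ Set.Icc (if (0:ℕ) = 0 then u else v) (if (0+1:ℕ) = 0 then u else v)
    rw [if_pos rfl, if_neg (by omega : ¬(0+1 = 0))]
    exact ⟨h1, h2⟩

lemma single_t0 (u v τ : ℝ) (h1 : u ≤ τ) (h2 : τ ≤ v) : (single u v τ h1 h2).t 0 = u := rfl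
lemma single_t1 (u v τ : ℝ) (h1 : u ≤ τ) (h2 : τ ≤ v) : (single u v τ h1 h2).t 1 = v := rfl
lemma single_tag (u v τ : ℝ) (h1 : u ≤ τ) (h2 : τ ≤ v) (i : ℕ) :
    (single u v τ h1 h2).tag i = τ := rfl

lemma single_sub {u v τ : ℝ} {h1 : u ≤ τ} {h2 : τ ≤ v} {δ : ℝ → ℝ}
    (h : Set.Icc u v ⊆ Set.Ioo (τ - δ τ) (τ + δ τ)) :
    (single u v τ h1 h2).Subordinate δ := by
  intro i hi
  have hi1 : i = 0 := by
    have : (single u v τ h1 h2).n = 1 := rfl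
    omega
  subst hi1
  rw [single_t0, single_t1, single_tag]
  exact h

section Concat

variable {u m v : ℝ} (P : TaggedPartition u m) (Q : TaggedPartition m v)

/-- division points of the concatenation -/
def ct (i : ℕ) : ℝ := if i ≤ P.n then P.t i else Q.t (i - P.n)

def ctag (i : ℕ) : ℝ := if i < P.n then P.tag i else Q.tag (i - P.n)

lemma ct_le {i : ℕ} (h : i ≤ P.n) : ct P Q i = P.t i := if_pos h

lemma ct_ge {i : ℕ} (h : P.n ≤ i) : ct P Q i = Q.t (i - P.n) := by
  rcases eq_or_lt_of_le h with h' | h'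
  · subst h'
    rw [ct, if_pos le_rfl, Nat.sub_self, Q.t_first, P.t_last]
  · rw [ct, if_neg (by omega)]

lemma ctag_lt {i : ℕ} (h : i < P.n) : ctag P Q i = P.tag i := if_pos h

lemma ctag_ge {i : ℕ} (h : P.n ≤ i) : ctag P Q i = Q.tag (i - P.n) := by
  rw [ctag, if_neg (by omega)]

/-- concatenation -/
def concat : TaggedPartition u v where
  n := P.n + Q.n
  t := ct P Q
  tag := ctag P Q
  t_first := by rw [ct_le P Q (Nat.zero_le _), P.t_first]
  t_last := by
    rw [ct_ge P Q (Nat.le_add_right _ _), Nat.add_sub_cancel_left, Q.t_last]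
  t_mono := by
    intro i hi
    rcases lt_or_ge i P.n with h | h
    · rw [ct_le P Q (by omega), ct_le P Q (by omega)]
      exact P.t_mono i h
    · rw [ct_ge P Q h, ct_ge P Q (by omega)]
      have e : i + 1 - P.n = (i - P.n) + 1 := by omega
      rw [e]
      exact Q.t_mono _ (by omega)
  tag_mem := by
    intro i hi
    rcases lt_or_ge i P.n with h | h
    · rw [ctag_lt P Q h, ct_le P Q (by omega), ct_le P Q (by omega)]
      exact P.tag_mem i h
    · rw [ctag_ge P Q h, ct_ge P Q h, ct_ge P Q (by omega)]
      have e : i + 1 - P.n = (i - P.n) + 1 := by omega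
      rw [e]
      exact Q.tag_mem _ (by omega)

lemma concat_n : (concat P Q).n = P.n + Q.n := rfl
lemma concat_t (i : ℕ) : (concat P Q).t i = ct P Q i := rfl
lemma concat_tag (i : ℕ) : (concat P Q).tag i = ctag P Q i := rfl

lemma concat_sub {δ : ℝ → ℝ} (hP : P.Subordinate δ) (hQ : Q.Subordinate δ) :
    (concat P Q).Subordinate δ := by
  intro i hi
  rw [concat_t, concat_t, concat_tag]
  rcases lt_or_ge i P.n with h | h
  · rw [ctag_lt P Q h, ct_le P Q (by omega), ct_le P Q (by omega)]
    exact hP i h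
  · rw [ctag_ge P Q h, ct_ge P Q h, ct_ge P Q (by omega)]
    have e : i + 1 - P.n = (i - P.n) + 1 := by omega
    rw [e]
    exact hQ _ (by rw [concat_n] at hi; omega)

lemma concat_sum (f : ℝ → ℝ → ℝ → ℝ) :
    ∑ i ∈ Finset.range (concat P Q).n,
        f ((concat P Q).tag i) ((concat P Q).t i) ((concat P Q).t (i + 1))
      = (∑ i ∈ Finset.range P.n, f (P.tag i) (P.t i) (P.t (i + 1)))
        + ∑ i ∈ Finset.range Q.n, f (Q.tag i) (Q.t i) (Q.t (i + 1)) := by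
  rw [concat_n, sum_range_add']
  congr 1
  · apply Finset.sum_congr rfl
    intro i hi
    have h : i < P.n := Finset.mem_range.1 hi
    rw [concat_t, concat_t, concat_tag, ctag_lt P Q h, ct_le P Q (by omega),
      ct_le P Q (by omega)]
  · apply Finset.sum_congr rfl
    intro j hj
    rw [concat_t, concat_t, concat_tag, ctag_ge P Q (Nat.le_add_right _ _),
      ct_ge P Q (Nat.le_add_right _ _), ct_ge P Q (by omega),
      Nat.add_sub_cancel_left]
    have e : P.n + j + 1 - P.n = j + 1 := by omega
    rw [e]

end Concat

/-- Cousin's lemma -/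
lemma cousin (u v : ℝ) (huv : u ≤ v) (δ : ℝ → ℝ) (hδ : ∀ x ∈ Set.Icc u v, 0 < δ x) :
    ∃ P : TaggedPartition u v, P.Subordinate δ := by
  have key : ∀ w : ℝ, w ∈ Set.Icc u v →
      (∀ x ∈ Set.Icc u w, x ∈ {x | x ∈ Set.Icc u v ∧
        ∃ P : TaggedPartition u x, P.Subordinate δ} → True) → True := fun _ _ _ => trivial
  set S : Set ℝ := {x | x ∈ Set.Icc u v ∧ ∃ P : TaggedPartition u x, P.Subordinate δ} with hS
  have huS : u ∈ S := ⟨⟨le_refl u, huv⟩, point u, point_sub u δ⟩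
  have hSne : S.Nonempty := ⟨u, huS⟩
  have hSbdd : BddAbove S := ⟨v, fun x hx => hx.1.2⟩
  have main : ∀ s : ℝ, s = sSup S → ∃ P : TaggedPartition u v, P.Subordinate δ := by
    intro s hs
    have hus : u ≤ s := hs ▸ le_csSup hSbdd huS
    have hsv : s ≤ v := hs ▸ csSup_le hSne (fun x hx => hx.1.2)
    have hδs : 0 < δ s := hδ s ⟨hus, hsv⟩
    obtain ⟨x, hxS, hxgt⟩ : ∃ x ∈ S, s - δ s < x := by
      rw [hs]; exact exists_lt_of_lt_csSup hSne (by rw [← hs]; linarith)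
    obtain ⟨⟨hux, hxv⟩, P, hP⟩ := hxS
    have hxs : x ≤ s := hs ▸ le_csSup hSbdd ⟨⟨hux, hxv⟩, P, hP⟩
    have hvS : v ∈ S := by
      rcases eq_or_lt_of_le hsv with hsv' | hsv'
      · -- s = v : build partition of [u, v] directly
        refine ⟨⟨le_trans hux (hxs.trans hsv), le_refl v⟩,
          concat P (single x v s hxs hsv), ?_⟩
        apply concat_sub _ _ hP
        apply single_sub
        intro z hz
        exact ⟨lt_of_lt_of_le hxgt hz.1, lt_of_le_of_lt hz.2 (by rw [← hsv']; linarith)⟩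
      · -- s < v : contradiction with sup
        exfalso
        have hwmem : min v (s + δ s / 2) ∈ S := by
          have hsw : s ≤ min v (s + δ s / 2) := le_min hsv (by linarith)
          refine ⟨⟨le_trans hux (hxs.trans hsw), min_le_left _ _⟩,
            concat P (single x _ s (hxs) hsw), ?_⟩
          apply concat_sub _ _ hP
          apply single_sub
          intro z hz
          refine ⟨lt_of_lt_of_le hxgt hz.1, lt_of_le_of_lt hz.2 ?_⟩
          exact lt_of_le_of_lt (min_le_right _ _) (by linarith)
        have h1 : min v (s + δ s / 2) ≤ sSup S := le_csSup hSbdd hwmem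
        rw [← hs] at h1
        have h2 : s < min v (s + δ s / 2) := lt_min hsv' (by linarith)
        linarith
    exact hvS.2
  exact main (sSup S) rfl

/-- Key construction: given a finite pairwise-disjoint family of tagged fine intervals inside
`[u,v]`, there is a subordinate tagged partition of `[u,v]` whose `E`-restricted variation sum
dominates the sum over the family. -/
lemma build (δ : ℝ → ℝ) (g : ℝ → ℝ) (E : Set ℝ) :
    ∀ (N : ℕ) (F : Finset (ℝ × ℝ × ℝ)) (u v : ℝ), F.card = N → u ≤ v →
    (∀ x ∈ Set.Icc u v, 0 < δ x) →
    (∀ z ∈ F, u ≤ z.2.1 ∧ z.2.1 < z.2.2 ∧ z.2.2 ≤ v ∧ z.1 ∈ E ∧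
      z.1 ∈ Set.Icc z.2.1 z.2.2 ∧
      Set.Icc z.2.1 z.2.2 ⊆ Set.Ioo (z.1 - δ z.1) (z.1 + δ z.1)) →
    ((F : Set (ℝ × ℝ × ℝ)).Pairwise fun z w =>
      Disjoint (Set.Icc z.2.1 z.2.2) (Set.Icc w.2.1 w.2.2)) →
    ∃ P : TaggedPartition u v, P.Subordinate δ ∧
      (∑ z ∈ F, |g z.2.2 - g z.2.1|) ≤
        ∑ i ∈ Finset.range P.n,
          (if P.tag i ∈ E then |g (P.t (i + 1)) - g (P.t i)| else 0) := by
  intro N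
  induction N with
  | zero =>
    intro F u v hcard huv hδ hF hdisj
    obtain ⟨P, hP⟩ := cousin u v huv δ hδ
    refine ⟨P, hP, ?_⟩
    rw [Finset.card_eq_zero.1 hcard, Finset.sum_empty]
    apply Finset.sum_nonneg
    intro i _
    split
    · exact abs_nonneg _
    · exact le_refl 0
  | succ N ih =>
    intro F u v hcard huv hδ hF hdisj
    have hne : F.Nonempty := Finset.card_pos.1 (by omega)
    obtain ⟨z₀, hz₀F, hz₀min⟩ := F.exists_min_image (fun z => z.2.1) hne
    obtain ⟨hup, hpq, hqv, hxE, hxmem, hfine⟩ := hF z₀ hz₀F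
    set p := z₀.2.1
    set q := z₀.2.2
    set x := z₀.1
    -- all other intervals lie in [q, v]
    have hrest : ∀ z ∈ F.erase z₀, q ≤ z.2.1 := by
      intro z hz
      have hzF := Finset.mem_of_mem_erase hz
      have hzne : z ≠ z₀ := Finset.ne_of_mem_erase hz
      have hdzz := hdisj hzF hz₀F hzne
      have hpz : p ≤ z.2.1 := hz₀min z hzF
      by_contra hlt
      push_neg at hlt
      have : z.2.1 ∈ Set.Icc z.2.1 z.2.2 := ⟨le_refl _, le_of_lt (hF z hzF).2.1⟩
      have h2 : z.2.1 ∈ Set.Icc p q := ⟨hpz, le_of_lt hlt⟩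
      exact (Set.disjoint_left.1 hdzz this) h2
    have hqv' : q ≤ v := hqv
    -- recursive partition of [q, v]
    obtain ⟨P₂, hP₂sub, hP₂sum⟩ := ih (F.erase z₀) q v
      (by rw [Finset.card_erase_of_mem hz₀F, hcard]; omega)
      hqv'
      (fun y hy => hδ y ⟨le_trans (le_trans hup (le_of_lt hpq)) hy.1, hy.2⟩)
      (fun z hz => by
        obtain ⟨h1, h2, h3, h4, h5, h6⟩ := hF z (Finset.mem_of_mem_erase hz)
        exact ⟨hrest z hz, h2, h3, h4, h5, h6⟩)
      (hdisj.mono (by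
        intro w hw
        exact Finset.mem_of_mem_erase hw))
    -- Cousin partition of [u, p]
    obtain ⟨P₁, hP₁sub⟩ := cousin u p hup δ
      (fun y hy => hδ y ⟨hy.1, le_trans hy.2 (le_trans (le_of_lt hpq) hqv)⟩)
    -- single interval [p, q] tagged x
    have hxp : p ≤ x := hxmem.1
    have hxq : x ≤ q := hxmem.2
    set Ps := single p q x hxp hxq
    have hPssub : Ps.Subordinate δ := single_sub hfine
    set P := concat (concat P₁ Ps) P₂
    refine ⟨P, concat_sub _ _ (concat_sub _ _ hP₁sub hPssub) hP₂sub, ?_⟩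
    have hsumP : ∑ i ∈ Finset.range P.n,
        (if P.tag i ∈ E then |g (P.t (i + 1)) - g (P.t i)| else 0)
        = (∑ i ∈ Finset.range P₁.n,
            (if P₁.tag i ∈ E then |g (P₁.t (i + 1)) - g (P₁.t i)| else 0))
          + ((if Ps.tag 0 ∈ E then |g (Ps.t 1) - g (Ps.t 0)| else 0)
          + ∑ i ∈ Finset.range P₂.n,
            (if P₂.tag i ∈ E then |g (P₂.t (i + 1)) - g (P₂.t i)| else 0)) := by
      have e1 := concat_sum (concat P₁ Ps) P₂
        (fun τ s t => if τ ∈ E then |g t - g s| else 0)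
      have e2 := concat_sum P₁ Ps (fun τ s t => if τ ∈ E then |g t - g s| else 0)
      rw [e1, e2, add_assoc]
      congr 1
      congr 1
      show (∑ i ∈ Finset.range 1, _) = _
      rw [Finset.sum_range_one]
    rw [hsumP]
    have hsumF : ∑ z ∈ F, |g z.2.2 - g z.2.1|
        = |g q - g p| + ∑ z ∈ F.erase z₀, |g z.2.2 - g z.2.1| := by
      rw [← Finset.add_sum_erase _ _ hz₀F]
    rw [hsumF]
    have h1 : (0:ℝ) ≤ ∑ i ∈ Finset.range P₁.n,
        (if P₁.tag i ∈ E then |g (P₁.t (i + 1)) - g (P₁.t i)| else 0) := by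
      apply Finset.sum_nonneg
      intro i _
      split
      · exact abs_nonneg _
      · exact le_refl 0
    have h2 : (if Ps.tag 0 ∈ E then |g (Ps.t 1) - g (Ps.t 0)| else 0)
        = |g q - g p| := by
      rw [single_tag, single_t0, single_t1, if_pos hxE]
    linarith [hP₂sum]

/-- The set of points of `E` in the open interval at which the difference quotients are
frequently at least `c` has measure zero. -/
lemma Aset_null (a b c : ℝ) (g : ℝ → ℝ) (E : Set ℝ) (hE : E ⊆ Set.Icc a b)
    (hc : 0 < c) (hvar : NegVar a b g E) :
    volume {x | x ∈ E ∧ x ∈ Set.Ioo a b ∧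
      ∀ r > 0, ∃ y, y ≠ x ∧ |y - x| < r ∧ c * |y - x| ≤ |g y - g x|} = 0 := by
  set A : Set ℝ := {x | x ∈ E ∧ x ∈ Set.Ioo a b ∧
      ∀ r > 0, ∃ y, y ≠ x ∧ |y - x| < r ∧ c * |y - x| ≤ |g y - g x|} with hA
  rcases le_or_gt a b with hab | hab
  swap
  · have : A = ∅ := by
      ext x
      simp only [hA, Set.mem_setOf_eq, Set.mem_empty_iff_false, iff_false]
      rintro ⟨_, hx2, _⟩
      exact absurd (hx2.1.trans hx2.2) (not_lt.2 hab.le)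
    rw [this, measure_empty]
  -- main estimate
  have key : ∀ ε : ℝ, 0 < ε → volume A ≤ ENNReal.ofReal (ε / c) := by
    intro ε hε
    obtain ⟨δ, hgauge, hδvar⟩ := hvar ε hε
    -- the Vitali family of tagged intervals
    set T : Set (ℝ × ℝ × ℝ) := {z | z.1 ∈ A ∧ a ≤ z.2.1 ∧ z.2.2 ≤ b ∧ z.2.1 < z.2.2 ∧
      z.1 ∈ Set.Icc z.2.1 z.2.2 ∧
      Set.Icc z.2.1 z.2.2 ⊆ Set.Ioo (z.1 - δ z.1) (z.1 + δ z.1) ∧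
      c * (z.2.2 - z.2.1) ≤ |g z.2.2 - g z.2.1|} with hT
    obtain ⟨U, hUT, hUc, hUdisj, hUnull⟩ := Vitali.exists_disjoint_covering_ae
      (volume : Measure ℝ) A T 6 (fun z => z.2.2 - z.2.1) (fun z => z.1)
      (fun z => Set.Icc z.2.1 z.2.2)
      (by -- hB
        rintro z hz w hw
        have h1 := hz.2.2.2.2.1
        exact Real.dist_le_of_mem_Icc hw h1)
      (by -- μB
        intro z hz
        rw [Real.volume_closedBall, Real.volume_Icc]
        have e : 2 * (3 * (z.2.2 - z.2.1)) = 6 * (z.2.2 - z.2.1) := by ring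
        rw [e]
        rw [show ((6 : ℝ≥0) : ℝ≥0∞) = ENNReal.ofReal 6 by simp]
        rw [← ENNReal.ofReal_mul (by norm_num)])
      (by -- interiors nonempty
        intro z hz
        rw [interior_Icc]
        exact Set.nonempty_Ioo.2 hz.2.2.2.1)
      (fun z hz => isClosed_Icc)
      (by -- fineness
        intro x hx ε0 hε0
        obtain ⟨hxE, hxI, hxprop⟩ := hx
        have hδx : 0 < δ x := hgauge x (hE hxE)
        have hr' : 0 < min ε0 (min (δ x) (min (x - a) (b - x))) := by
          have := hxI.1
          have := hxI.2
          refine lt_min hε0 (lt_min hδx (lt_min (by linarith) (by linarith)))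
        obtain ⟨y, hyne, hylt, hyvar⟩ := hxprop _ hr'
        have hy1 : |y - x| < ε0 := lt_of_lt_of_le hylt (min_le_left _ _)
        have hy2 : |y - x| < δ x := lt_of_lt_of_le hylt
          ((min_le_right _ _).trans (min_le_left _ _))
        have hy3 : |y - x| < x - a := lt_of_lt_of_le hylt
          ((min_le_right _ _).trans ((min_le_right _ _).trans (min_le_left _ _)))
        have hy4 : |y - x| < b - x := lt_of_lt_of_le hylt
          ((min_le_right _ _).trans ((min_le_right _ _).trans (min_le_right _ _)))
        refine ⟨(x, min x y, max x y), ?_, ?_, rfl⟩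
        · have habs1 : x - |y - x| ≤ min x y := by
            rcases abs_cases (y - x) with ⟨he, _⟩ | ⟨he, _⟩ <;>
              [skip; skip] <;> rcases le_total x y with h' | h' <;>
              simp [min_eq_left, min_eq_right, h'] <;> linarith
          have habs2 : max x y ≤ x + |y - x| := by
            rcases abs_cases (y - x) with ⟨he, _⟩ | ⟨he, _⟩ <;>
              rcases le_total x y with h' | h' <;>
              simp [max_eq_left, max_eq_right, h'] <;> linarith
          have hpq : min x y < max x y := min_lt_max.2 hyne.symm
          have hlen : max x y - min x y = |y - x| := by
            rcases le_total x y with h' | h'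
            · rw [min_eq_left h', max_eq_right h', abs_of_nonneg (by linarith)]
            · rw [min_eq_right h', max_eq_left h', abs_of_nonpos (by linarith)]
              ring
          refine ⟨⟨hxE, hxI, hxprop⟩, by linarith, by linarith, hpq,
            ⟨min_le_left _ _, le_max_left _ _⟩, ?_, ?_⟩
          · intro w hw
            constructor
            · have : x - |y - x| ≤ w := le_trans habs1 hw.1
              linarith
            · have : w ≤ x + |y - x| := le_trans hw.2 habs2
              linarith
          · rw [hlen]
            rcases le_total x y with h' | h'
            · rw [min_eq_left h', max_eq_right h']
              exact hyvar
            · rw [min_eq_right h', max_eq_left h', abs_sub_comm (g x) (g y)]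
              exact hyvar
        · have hlen : max x y - min x y = |y - x| := by
            rcases le_total x y with h' | h'
            · rw [min_eq_left h', max_eq_right h', abs_of_nonneg (by linarith)]
            · rw [min_eq_right h', max_eq_left h', abs_of_nonpos (by linarith)]
              ring
          show max x y - min x y ≤ ε0
          rw [hlen]
          exact hy1.le)
    -- now estimate the measure
    have hcover : volume A ≤ volume (⋃ z ∈ U, Set.Icc z.2.1 z.2.2) := by
      calc volume A ≤ volume ((A \ ⋃ z ∈ U, Set.Icc z.2.1 z.2.2)
            ∪ ⋃ z ∈ U, Set.Icc z.2.1 z.2.2) :=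
          measure_mono (Set.subset_diff_union _ _)
        _ ≤ volume (A \ ⋃ z ∈ U, Set.Icc z.2.1 z.2.2)
            + volume (⋃ z ∈ U, Set.Icc z.2.1 z.2.2) := measure_union_le _ _
        _ = volume (⋃ z ∈ U, Set.Icc z.2.1 z.2.2) := by rw [hUnull, zero_add]
    have hsum : volume (⋃ z ∈ U, Set.Icc z.2.1 z.2.2)
        ≤ ∑' z : U, volume (Set.Icc (z : ℝ × ℝ × ℝ).2.1 (z : ℝ × ℝ × ℝ).2.2) :=
      measure_biUnion_le volume hUc _
    have htsum : (∑' z : U, volume (Set.Icc (z : ℝ × ℝ × ℝ).2.1 (z : ℝ × ℝ × ℝ).2.2))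
        ≤ ENNReal.ofReal (ε / c) := by
      apply Summable.tsum_le_of_sum_le ENNReal.summable
      intro s
      set F : Finset (ℝ × ℝ × ℝ) := s.image Subtype.val with hF
      have hinj : Set.InjOn Subtype.val (s : Set U) := fun p _ q _ h => Subtype.ext h
      have hsum_eq : ∑ z ∈ s, volume (Set.Icc (z : ℝ × ℝ × ℝ).2.1 (z : ℝ × ℝ × ℝ).2.2)
          = ∑ w ∈ F, volume (Set.Icc w.2.1 w.2.2) := by
        rw [hF, Finset.sum_image (fun p hp q hq h => Subtype.ext h)]
      rw [hsum_eq]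
      -- properties of members of F
      have hFmem : ∀ w ∈ F, w ∈ T := by
        intro w hw
        rw [hF] at hw
        obtain ⟨z, hz, rfl⟩ := Finset.mem_image.1 hw
        exact hUT z.2
      -- build the tagged partition
      obtain ⟨P, hPsub, hPsum⟩ := build δ g E F.card F a b rfl hab
        (fun x hx => hgauge x hx)
        (by
          intro z hz
          obtain ⟨hzA, hza, hzb, hzpq, hzmem, hzfine, hzvar⟩ := hFmem z hz
          exact ⟨hza, hzpq, hzb, hzA.1, hzmem, hzfine⟩)
        (by
          intro z hz w hw hne
          have hzU : z ∈ U := by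
            rw [hF] at hz
            obtain ⟨z', hz', rfl⟩ := Finset.mem_image.1 (by exact_mod_cast hz)
            exact z'.2
          have hwU : w ∈ U := by
            rw [hF] at hw
            obtain ⟨w', hw', rfl⟩ := Finset.mem_image.1 (by exact_mod_cast hw)
            exact w'.2
          exact hUdisj hzU hwU hne)
      have hlt : (∑ w ∈ F, |g w.2.2 - g w.2.1|) < ε :=
        lt_of_le_of_lt hPsum (hδvar P hPsub)
      have hlenle : (∑ w ∈ F, (w.2.2 - w.2.1)) ≤ ε / c := by
        rw [le_div_iff₀ hc, mul_comm]
        calc c * ∑ w ∈ F, (w.2.2 - w.2.1) = ∑ w ∈ F, c * (w.2.2 - w.2.1) := by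
              rw [Finset.mul_sum]
          _ ≤ ∑ w ∈ F, |g w.2.2 - g w.2.1| := by
              apply Finset.sum_le_sum
              intro w hw
              exact (hFmem w hw).2.2.2.2.2.2
          _ ≤ ε := hlt.le
      calc ∑ w ∈ F, volume (Set.Icc w.2.1 w.2.2)
          = ∑ w ∈ F, ENNReal.ofReal (w.2.2 - w.2.1) := by
            apply Finset.sum_congr rfl
            intro w hw
            rw [Real.volume_Icc]
        _ = ENNReal.ofReal (∑ w ∈ F, (w.2.2 - w.2.1)) := by
            rw [ENNReal.ofReal_sum_of_nonneg]
            intro w hw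
            linarith [(hFmem w hw).2.2.2.1]
        _ ≤ ENNReal.ofReal (ε / c) := ENNReal.ofReal_le_ofReal hlenle
    exact hcover.trans (hsum.trans htsum)
  -- conclude
  have : volume A ≤ 0 := by
    apply ENNReal.le_of_forall_pos_le_add
    intro η hη _
    have h1 := key (c * η) (by positivity)
    have e : c * (η : ℝ) / c = (η : ℝ) := by field_simp
    rw [e] at h1
    calc volume A ≤ ENNReal.ofReal (η : ℝ) := h1
      _ = (η : ℝ≥0∞) := ENNReal.ofReal_coe_nnreal
      _ ≤ 0 + (η : ℝ≥0∞) := by rw [zero_add]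
  exact le_antisymm this (zero_le)

end Aux

/-- if `g` has negligible variation on `E`, then the symmetric upper Dini
derivative of `g` is `0` at almost every point of `E`. -/
theorem stmt5 (a b : ℝ) (g : ℝ → ℝ) (E : Set ℝ) (hE : E ⊆ Set.Icc a b)
    (h : NegVar a b g E) :
    MeasureTheory.volume {x ∈ E | ¬ Filter.Tendsto (fun y => |(g y - g x) / (y - x)|)
      (nhdsWithin x {x}ᶜ) (nhds 0)} = 0 := by
  have hsub : {x ∈ E | ¬ Filter.Tendsto (fun y => |(g y - g x) / (y - x)|)
      (nhdsWithin x {x}ᶜ) (nhds 0)} ⊆ ({a, b} : Set ℝ) ∪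
      ⋃ (m : ℕ), {x | x ∈ E ∧ x ∈ Set.Ioo a b ∧ ∀ r > 0, ∃ y, y ≠ x ∧ |y - x| < r ∧
        (1 / ((m : ℝ) + 1)) * |y - x| ≤ |g y - g x|} := by
    rintro x ⟨hxE, hxT⟩
    by_cases hx : x = a ∨ x = b
    · exact Or.inl (by rcases hx with h' | h' <;> simp [h'])
    push_neg at hx
    have hxI : x ∈ Set.Ioo a b := by
      have h1 := hE hxE
      exact ⟨lt_of_le_of_ne h1.1 (fun h' => hx.1 h'.symm), lt_of_le_of_ne h1.2 hx.2⟩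
    have hns : ∃ ε > 0, ∃ᶠ y in nhdsWithin x {x}ᶜ, ε ≤ |(g y - g x) / (y - x)| := by
      by_contra hcon
      push_neg at hcon
      apply hxT
      rw [Metric.tendsto_nhds]
      intro ε hε
      have h1 := hcon ε hε
      filter_upwards [h1] with y hy
      rw [Real.dist_eq, sub_zero, abs_abs]
      exact hy
    obtain ⟨ε, hε, hfreq⟩ := hns
    obtain ⟨m, hm⟩ := exists_nat_one_div_lt hε
    refine Or.inr (Set.mem_iUnion.2 ⟨m, hxE, hxI, ?_⟩)
    intro r hr
    have hev : ∀ᶠ y in nhdsWithin x {x}ᶜ, y ≠ x ∧ |y - x| < r := by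
      have h1 : ∀ᶠ y in nhds x, |y - x| < r := by
        filter_upwards [Metric.ball_mem_nhds x hr] with y hy
        rwa [Metric.mem_ball, Real.dist_eq] at hy
      have h2 : ∀ᶠ y in nhdsWithin x {x}ᶜ, |y - x| < r :=
        eventually_nhdsWithin_of_eventually_nhds h1
      have h3 : ∀ᶠ y in nhdsWithin x {x}ᶜ, y ≠ x := by
        filter_upwards [self_mem_nhdsWithin] with y hy
        simpa using hy
      exact h3.and h2
    obtain ⟨y, hy1, hy2, hy3⟩ := (hfreq.and_eventually hev).exists
    refine ⟨y, hy2, hy3, ?_⟩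
    have hyx : 0 < |y - x| := abs_pos.2 (sub_ne_zero.2 hy2)
    rw [abs_div] at hy1
    have h4 : ε * |y - x| ≤ |g y - g x| := (le_div_iff₀ hyx).1 hy1
    calc (1 / ((m : ℝ) + 1)) * |y - x| ≤ ε * |y - x| :=
          mul_le_mul_of_nonneg_right hm.le (abs_nonneg _)
      _ ≤ |g y - g x| := h4
  refine measure_mono_null hsub ?_
  apply measure_union_null
  · exact (Set.toFinite ({a, b} : Set ℝ)).measure_zero volume
  · apply measure_iUnion_null
    intro m
    exact Aux.Aset_null a b (1 / ((m : ℝ) + 1)) g E hE (by positivity) h
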